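/- Let 𝓘 = {(i₁,…,i_m) ∈ ℤ_{≥0}^m : Σi_k ≤ d} and choose s_I ∈ (0,1)^m for I ∈ 𝓘 with s_{I₁,k} ≠ s_{I₂,k} whenever I₁ ≠ I₂, for every coordinate k. Then the |𝓘|×|𝓘| matrix M = (s_I^J)_{I,J∈𝓘}, where s^J = ∏_k s_k^{j_k}, is invertible. -/

import Mathlib

open Set

open MvPolynomial in
private lemma aux_eq_C {σ' : Type*} {R : Type*} [CommSemiring R]
    (P : MvPolynomial σ' R) (h : P.totalDegree = 0) :
    P = MvPolynomial.C (MvPolynomial.coeff 0 P) := by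
  classical
  ext μ
  rw [MvPolynomial.coeff_C]
  split_ifs with hμ
  · rw [← hμ]
  · refine MvPolynomial.coeff_eq_zero_of_totalDegree_lt ?_
    rw [h]
    have hne : μ ≠ 0 := fun hh => hμ hh.symm
    obtain ⟨a, ha⟩ := Finsupp.ne_iff.mp hne
    simp only [Finsupp.coe_zero, Pi.zero_apply] at ha
    have hamem : a ∈ μ.support := Finsupp.mem_support_iff.mpr ha
    have : 0 < μ a := Nat.pos_of_ne_zero ha
    calc 0 < μ a := this
      _ ≤ ∑ i ∈ μ.support, μ i :=
        Finset.single_le_sum (fun _ _ => Nat.zero_le _) hamem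

open MvPolynomial in
private lemma aux_deg {n : ℕ} (x0 : Fin n) (c : ℝ) {R : MvPolynomial (Fin n) ℝ}
    (hR : R ≠ 0) :
    R.totalDegree + 1 ≤ ((MvPolynomial.X x0 - MvPolynomial.C c) * R).totalDegree := by
  classical
  obtain ⟨μ, hμmem, hμ⟩ := R.support.exists_mem_eq_sup
    (MvPolynomial.support_nonempty.mpr hR) (fun s => s.sum fun _ e => e)
  have hμdeg : (μ.sum fun _ e => e) = R.totalDegree := hμ.symm
  set ν : Fin n →₀ ℕ := Finsupp.single x0 1 + μ with hν
  have hνsum : (ν.sum fun _ e => e) = R.totalDegree + 1 := by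
    rw [hν, Finsupp.sum_add_index' (fun _ => rfl) (fun _ _ _ => rfl),
      Finsupp.sum_single_index rfl, hμdeg, add_comm]
  have hco : MvPolynomial.coeff ν ((MvPolynomial.X x0 - MvPolynomial.C c) * R)
      = MvPolynomial.coeff μ R := by
    rw [sub_mul, MvPolynomial.coeff_sub, hν, MvPolynomial.coeff_X_mul,
      MvPolynomial.coeff_C_mul]
    have hν' : (∑ i ∈ ν.support, ν i) = R.totalDegree + 1 := by
      rw [← hνsum]; rfl
    have hzero : MvPolynomial.coeff ν R = 0 :=
      MvPolynomial.coeff_eq_zero_of_totalDegree_lt (by rw [hν']; omega)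
    rw [← hν, hzero, mul_zero, sub_zero]
  have hmem : ν ∈ ((MvPolynomial.X x0 - MvPolynomial.C c) * R).support := by
    rw [MvPolynomial.mem_support_iff, hco]
    exact MvPolynomial.mem_support_iff.mp hμmem
  have := MvPolynomial.le_totalDegree hmem
  rwa [hνsum] at this

open MvPolynomial in
private lemma vanish_lattice : ∀ (m : ℕ) (d : ℕ) (τ : Fin m → ℕ → ℝ),
    (∀ k, Function.Injective (τ k)) → ∀ P : MvPolynomial (Fin m) ℝ,
    P.totalDegree ≤ d →
    (∀ I : Fin m → ℕ, (∑ k, I k) ≤ d →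
      MvPolynomial.eval (fun k => τ k (I k)) P = 0) → P = 0 := by
  intro m
  induction m with
  | zero =>
    intro d τ _ P hdeg hvan
    obtain ⟨a, rfl⟩ := MvPolynomial.C_surjective (Fin 0) P
    have := hvan (fun _ => 0) (by simp)
    simpa using this
  | succ m ihm =>
    intro d
    induction d with
    | zero =>
      intro τ hτ P hdeg hvan
      have h0 : P.totalDegree = 0 := Nat.le_zero.mp hdeg
      have hPC := aux_eq_C P h0
      have := hvan (fun _ => 0) (by simp)
      rw [hPC] at this ⊢
      simpa using this
    | succ d ihd =>
      intro τ hτ P hdeg hvan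
      classical
      set c : ℝ := τ 0 0 with hc
      set q : Polynomial (MvPolynomial (Fin m) ℝ) := MvPolynomial.finSuccEquiv ℝ m P with hq
      set q₀ : MvPolynomial (Fin m) ℝ := q.eval (MvPolynomial.C c) with hq₀
      have hCmap : MvPolynomial.finSuccEquiv ℝ m (MvPolynomial.C c)
          = Polynomial.C (MvPolynomial.C c) := by
        simp [MvPolynomial.finSuccEquiv_apply]
      have key : ∀ s : Fin m → ℝ,
          MvPolynomial.eval s q₀ = MvPolynomial.eval (Fin.cons c s) P := by
        intro s
        rw [MvPolynomial.eval_eq_eval_mv_eval', hq₀]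
        have h1 : (MvPolynomial.eval s) (Polynomial.eval (MvPolynomial.C c) q)
            = Polynomial.eval₂ (MvPolynomial.eval s)
              ((MvPolynomial.eval s) (MvPolynomial.C c)) q :=
          (Polynomial.eval₂_at_apply (MvPolynomial.eval s) (MvPolynomial.C c)).symm
        rw [h1, MvPolynomial.eval_C, Polynomial.eval_map]
      -- total degree of q₀
      have hq₀deg : q₀.totalDegree ≤ d + 1 := by
        rw [hq₀, Polynomial.eval_eq_sum_range]
        refine le_trans (MvPolynomial.totalDegree_finset_sum _ _) ?_
        refine Finset.sup_le fun i _ => ?_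
        rcases eq_or_ne (q.coeff i) 0 with h | h
        · simp [h]
        · refine le_trans (MvPolynomial.totalDegree_mul _ _) ?_
          have h2 : ((MvPolynomial.C c : MvPolynomial (Fin m) ℝ) ^ i).totalDegree = 0 := by
            rw [← map_pow, MvPolynomial.totalDegree_C]
          rw [h2, add_zero]
          have := MvPolynomial.totalDegree_coeff_finSuccEquiv_add_le P i (by rwa [← hq])
          rw [← hq] at this
          omega
      -- q₀ vanishes on the m-variable lattice of degree d+1
      have hq₀0 : q₀ = 0 := by
        refine ihm (d + 1) (fun k => τ k.succ) (fun k => hτ k.succ) q₀ hq₀deg ?_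
        intro I' hI'
        rw [key]
        have hpt : (Fin.cons c (fun k => τ k.succ (I' k)) : Fin (m + 1) → ℝ)
            = fun k => τ k ((Fin.cons 0 I' : Fin (m + 1) → ℕ) k) := by
          funext k
          refine Fin.cases ?_ ?_ k
          · simp [hc]
          · intro j; simp
        rw [hpt]
        refine hvan _ ?_
        rw [Fin.sum_univ_succ]
        simpa using hI'
      have hroot : Polynomial.X - Polynomial.C (MvPolynomial.C c) ∣ q :=
        Polynomial.dvd_iff_isRoot.mpr hq₀0
      obtain ⟨r, hr⟩ := hroot
      set R : MvPolynomial (Fin (m + 1)) ℝ := (MvPolynomial.finSuccEquiv ℝ m).symm r with hRdef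
      have hPR : P = (MvPolynomial.X 0 - MvPolynomial.C c) * R := by
        apply (MvPolynomial.finSuccEquiv ℝ m).injective
        rw [map_mul, map_sub, MvPolynomial.finSuccEquiv_X_zero, hCmap, hRdef,
          AlgEquiv.apply_symm_apply, ← hq, hr]
      rcases eq_or_ne R 0 with h0 | hR0
      · rw [hPR, h0, mul_zero]
      · have hdegR : R.totalDegree ≤ d := by
          have h1 := aux_deg (0 : Fin (m + 1)) c hR0
          rw [← hPR] at h1
          omega
        set τ' : Fin (m + 1) → ℕ → ℝ :=
          fun k => if k = 0 then (fun i => τ k (i + 1)) else τ k with hτ'def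
        have hτ' : ∀ k, Function.Injective (τ' k) := by
          intro k
          by_cases hk : k = 0
          · simp only [hτ'def, hk, if_pos]
            intro a b hab
            have := hτ 0 hab
            omega
          · simp only [hτ'def, if_neg hk]
            exact hτ k
        have hRvan : ∀ I : Fin (m + 1) → ℕ, (∑ k, I k) ≤ d →
            MvPolynomial.eval (fun k => τ' k (I k)) R = 0 := by
          intro I hI
          set I'' : Fin (m + 1) → ℕ := fun k => if k = 0 then I k + 1 else I k with hI''def
          have hsum : ∑ k, I'' k ≤ d + 1 := by
            have e1 : ∑ k, I'' k = I'' 0 + ∑ j : Fin m, I'' j.succ := Fin.sum_univ_succ _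
            have e2 : ∑ k, I k = I 0 + ∑ j : Fin m, I j.succ := Fin.sum_univ_succ _
            have e3 : ∀ j : Fin m, I'' j.succ = I j.succ := by
              intro j
              simp [hI''def, Fin.succ_ne_zero j]
            have e4 : I'' 0 = I 0 + 1 := by simp [hI''def]
            rw [e1, e4, Finset.sum_congr rfl (fun j _ => e3 j)]
            omega
          have hp := hvan I'' hsum
          have hpt : (fun k => τ k (I'' k)) = fun k => τ' k (I k) := by
            funext k
            by_cases hk : k = 0 <;> simp [hI''def, hτ'def, hk]
          rw [hpt, hPR, map_mul, map_sub, MvPolynomial.eval_X, MvPolynomial.eval_C] at hp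
          have hfac : τ' 0 (I 0) - c ≠ 0 := by
            simp only [hτ'def, if_pos rfl, hc]
            intro hcontra
            have : τ 0 (I 0 + 1) = τ 0 0 := by linarith [sub_eq_zero.mp hcontra]
            have := hτ 0 this
            omega
          exact (mul_eq_zero.mp hp).resolve_left hfac
        have hR : R = 0 := ihd τ' hτ' R hdegR hRvan
        rw [hPR, hR, mul_zero]

/-- Let `𝓘 = {(i₁,…,i_m) : Σ i_k ≤ d}` and `s_I = (σ_{i₁},…,σ_{i_m})`
for pairwise distinct `σ₀,…,σ_d ∈ (0,1)` (so that `s_{I₁,k} ≠ s_{I₂,k}` whenever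
`I₁ k ≠ I₂ k`).  Then the generalized Vandermonde matrix `M = (s_I^J)_{I,J ∈ 𝓘}`,
`s^J = Π_k s_k^{j_k}`, is invertible. -/
theorem lattice_action_multivariate_vandermonde (m d : ℕ)
    (σ : Fin (d + 1) → ℝ) (hσ : ∀ i, σ i ∈ Ioo (0 : ℝ) 1)
    (hσinj : Function.Injective σ) :
    (Matrix.of fun (I J : {f : Fin m → Fin (d + 1) // ∑ k, (f k : ℕ) ≤ d}) =>
        ∏ k, σ (I.val k) ^ ((J.val k : ℕ))).det ≠ 0 := by
  classical
  intro hdet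
  set ι := {f : Fin m → Fin (d + 1) // ∑ k, (f k : ℕ) ≤ d} with hι
  obtain ⟨v, hv, hMv⟩ := Matrix.exists_mulVec_eq_zero_iff.mpr hdet
  set fs : ι → (Fin m →₀ ℕ) :=
    fun J => Finsupp.equivFunOnFinite.symm (fun k => (J.val k : ℕ)) with hfs
  have hfs_apply : ∀ (J : ι) (k : Fin m), fs J k = (J.val k : ℕ) := by
    intro J k; simp [hfs]
  have hfsinj : Function.Injective fs := by
    intro J₁ J₂ h
    apply Subtype.ext
    funext k
    have hk : (J₁.val k : ℕ) = (J₂.val k : ℕ) := by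
      have h1 := congrArg (fun f : Fin m →₀ ℕ => f k) h
      simpa [hfs] using h1
    exact Fin.val_injective hk
  set P : MvPolynomial (Fin m) ℝ :=
    ∑ J : ι, MvPolynomial.monomial (fs J) (v J) with hP
  set τ : Fin m → ℕ → ℝ :=
    fun _ i => if h : i < d + 1 then σ ⟨i, h⟩ else (i : ℝ) with hτdef
  have hτ : ∀ k, Function.Injective (τ k) := by
    intro k a b hab
    simp only [hτdef] at hab
    split_ifs at hab with ha hb hb
    · exact congrArg Fin.val (hσinj hab)
    · exfalso
      have h1 : σ ⟨a, ha⟩ < 1 := (hσ _).2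
      have h2 : (1 : ℝ) ≤ (b : ℝ) := by
        have : 1 ≤ b := by omega
        exact_mod_cast this
      rw [hab] at h1; linarith
    · exfalso
      have h1 : σ ⟨b, hb⟩ < 1 := (hσ _).2
      have h2 : (1 : ℝ) ≤ (a : ℝ) := by
        have : 1 ≤ a := by omega
        exact_mod_cast this
      rw [← hab] at h1; linarith
    · exact_mod_cast hab
  have hdeg : P.totalDegree ≤ d := by
    rw [hP]
    refine le_trans (MvPolynomial.totalDegree_finset_sum _ _) ?_
    refine Finset.sup_le fun J _ => ?_
    rcases eq_or_ne (v J) 0 with h | h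
    · simp [h]
    · rw [MvPolynomial.totalDegree_monomial _ h]
      have : ((fs J).sum fun _ e => e) = ∑ k, (J.val k : ℕ) := by
        rw [Finsupp.sum_fintype _ _ (fun _ => rfl)]
        exact Finset.sum_congr rfl fun k _ => hfs_apply J k
      rw [this]
      exact J.property
  have hvan : ∀ I : Fin m → ℕ, (∑ k, I k) ≤ d →
      MvPolynomial.eval (fun k => τ k (I k)) P = 0 := by
    intro I hI
    have hlt : ∀ k, I k < d + 1 := by
      intro k
      have := Finset.single_le_sum (f := I) (fun _ _ => Nat.zero_le _) (Finset.mem_univ k)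
      omega
    set J' : ι := ⟨fun k => ⟨I k, hlt k⟩, by simpa using hI⟩ with hJ'
    have hpt : ∀ k, τ k (I k) = σ (J'.val k) := by
      intro k
      simp [hτdef, hlt k, hJ', Nat.lt_succ_iff.mp (hlt k)]
    have hMvJ' := congrFun hMv J'
    simp only [Matrix.mulVec, dotProduct, Matrix.of_apply, Pi.zero_apply] at hMvJ'
    rw [hP, map_sum]
    have : ∀ J : ι, MvPolynomial.eval (fun k => τ k (I k))
        (MvPolynomial.monomial (fs J) (v J))
        = (∏ k, σ (J'.val k) ^ ((J.val k : ℕ))) * v J := by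
      intro J
      rw [MvPolynomial.eval_monomial]
      rw [Finsupp.prod_fintype _ _ (fun _ => pow_zero _)]
      rw [mul_comm]
      congr 1
      exact Finset.prod_congr rfl fun k _ => by rw [hfs_apply, hpt]
    rw [Finset.sum_congr rfl fun J _ => this J]
    exact hMvJ'
  have hP0 : P = 0 := vanish_lattice m d τ hτ P hdeg hvan
  obtain ⟨J₀, hJ₀⟩ := Function.ne_iff.mp hv
  have hcoeff : MvPolynomial.coeff (fs J₀) P = v J₀ := by
    rw [hP, MvPolynomial.coeff_sum]
    rw [Finset.sum_eq_single J₀]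
    · rw [MvPolynomial.coeff_monomial, if_pos rfl]
    · intro J _ hJ
      rw [MvPolynomial.coeff_monomial, if_neg (fun h => hJ (hfsinj h))]
    · intro h; exact absurd (Finset.mem_univ J₀) h
  rw [hP0] at hcoeff
  simp only [MvPolynomial.coeff_zero] at hcoeff
  exact hJ₀ (by simpa using hcoeff.symm)
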